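/- For d ≥ 4, the function g(α) = (1/(s_{d-1} - 1)) · (1/(s_{d-1} - 1) - dα) · α satisfies g(α) ≥ 1/((d+1)(s_d - 1)^2) for all α in the interval [1/((d+1)(s_d - 1)), 1/((d+1)(s_{d-1} - 1))]. -/

import Mathlib

/-- The Sylvester sequence: `s 1 = 2` and `s i = 1 + s 1 * s 2 * ⋯ * s (i-1)` for `i ≥ 2`. -/
def sylvester : ℕ → ℕ
  | 0 => 2
  | 1 => 2
  | n + 2 => 1 + ∏ i ∈ (Finset.Icc 1 (n + 1)).attach, sylvester i.1
  decreasing_by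
    exact Nat.lt_succ_of_le (Finset.mem_Icc.mp i.2).2

lemma sylvester_succ_succ (n : ℕ) :
    sylvester (n + 2) = 1 + ∏ i ∈ Finset.Icc 1 (n + 1), sylvester i := by
  rw [sylvester]
  congr 1
  exact Finset.prod_attach _ _

lemma sylvester_rec (n : ℕ) :
    sylvester (n + 2) = 1 + sylvester (n + 1) * (sylvester (n + 1) - 1) := by
  match n with
  | 0 => simp [sylvester_succ_succ, sylvester]
  | m + 1 =>
    have hp : ∏ i ∈ Finset.Icc 1 (m + 1), sylvester i = sylvester (m + 2) - 1 := by
      rw [sylvester_succ_succ]; omega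
    rw [sylvester_succ_succ (m + 1), Finset.prod_Icc_succ_top (by omega : 1 ≤ m + 2), hp,
      Nat.sub_mul, Nat.mul_sub, one_mul, mul_one]

lemma sylvester_ge_two (n : ℕ) : 2 ≤ sylvester n := by
  induction n using Nat.strong_induction_on with
  | _ n ih =>
    match n with
    | 0 => norm_num [sylvester]
    | 1 => norm_num [sylvester]
    | m + 2 =>
      have := ih (m + 1) (by omega)
      rw [sylvester_rec]
      have : 1 * 1 ≤ sylvester (m+1) * (sylvester (m+1) - 1) :=
        Nat.mul_le_mul (by omega) (by omega)
      omega

lemma sylvester_ge (n : ℕ) : n + 1 ≤ sylvester n := by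
  induction n using Nat.strong_induction_on with
  | _ n ih =>
    match n with
    | 0 => norm_num [sylvester]
    | 1 => norm_num [sylvester]
    | m + 2 =>
      have h1 := ih (m + 1) (by omega)
      have h2 := sylvester_ge_two (m + 1)
      rw [sylvester_rec]
      have : (m + 2) * 1 ≤ sylvester (m+1) * (sylvester (m+1) - 1) :=
        Nat.mul_le_mul h1 (by omega)
      omega

theorem quadratic_lower_bound (d : ℕ) (hd : 4 ≤ d) (α : ℝ)
    (hα1 : 1 / (((d : ℝ) + 1) * ((sylvester d : ℝ) - 1)) ≤ α)
    (hα2 : α ≤ 1 / (((d : ℝ) + 1) * ((sylvester (d - 1) : ℝ) - 1))) :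
    1 / ((sylvester (d - 1) : ℝ) - 1) * (1 / ((sylvester (d - 1) : ℝ) - 1) - (d : ℝ) * α) * α ≥
      1 / (((d : ℝ) + 1) * ((sylvester d : ℝ) - 1) ^ 2) := by
  obtain ⟨e, rfl⟩ : ∃ e, d = e + 2 := ⟨d - 2, by omega⟩
  simp only [show e + 2 - 1 = e + 1 from rfl] at hα2 ⊢
  have h2 := sylvester_ge_two (e + 1)
  have hge := sylvester_ge (e + 1)
  set S : ℝ := (sylvester (e + 1) : ℝ) with hS
  set D : ℝ := (((e + 2 : ℕ)) : ℝ) with hD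
  have hrec : (sylvester (e + 2) : ℝ) - 1 = (S - 1) * ((S - 1) + 1) := by
    rw [sylvester_rec e]
    push_cast [Nat.cast_sub (by omega : 1 ≤ sylvester (e + 1))]
    ring
  set t : ℝ := S - 1 with ht
  have hD4 : 4 ≤ D := by rw [hD]; exact_mod_cast hd
  have hSD : D ≤ S := by
    rw [hD, hS]; exact_mod_cast (by omega : e + 2 ≤ sylvester (e + 1))
  have ht3 : 3 ≤ t := by rw [ht]; linarith
  have htpos : 0 < t := by linarith
  rw [hrec] at hα1 ⊢
  have hden1 : (0:ℝ) < (D + 1) * (t * (t + 1)) := by positivity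
  have hden2 : (0:ℝ) < (D + 1) * t := by positivity
  have hP : 0 ≤ α * ((D + 1) * (t * (t + 1))) - 1 := by
    rw [div_le_iff₀ hden1] at hα1; linarith
  have hQ : 0 ≤ 1 - α * ((D + 1) * t) := by
    rw [le_div_iff₀ hden2] at hα2; linarith
  have hαpos : 0 < α := by nlinarith
  rw [ge_iff_le, div_le_iff₀ (by positivity)]
  have hexpand : 1 / t * (1 / t - D * α) * α * ((D + 1) * (t * (t + 1)) ^ 2) =
      (D + 1) * (t + 1) ^ 2 * α - D * (D + 1) * t * (t + 1) ^ 2 * α ^ 2 := by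
    field_simp
  rw [hexpand]
  have hC : 0 ≤ D * (t - D) + t + 1 := by nlinarith
  nlinarith [mul_nonneg (mul_nonneg (by positivity : (0:ℝ) ≤ D * (t + 1) * (D + 1))
      hP) hQ,
    mul_nonneg hC hP,
    (by positivity : (0:ℝ) < (D + 1) ^ 2 * t)]
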